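/- For the right-handed trefoil knot, with F_1(λ,μ,Q) defined so that (∂_λ F_1)|_{(λ,Q)=(1,1)} = μ(μ-1)(μ²-μ+1) and (∂_Q F_1)|_{(λ,Q)=(1,1)} = μ(2-4μ+6μ²-3μ³), the expression (1-μ)·exp(∫ -(∂_Q F_1/∂_λ F_1)|_{(1,μ,1)} dp) with μ = e^p equals μ²(1-μ+μ²) up to a power of μ, which is the Alexander polynomial of the trefoil. -/

import Mathlib

/-- Verification that the augmentation-variety formula recovers the Alexander polynomial of
the right-handed trefoil: with `μ = e^p` and
`f(μ) = (2 - 4μ + 6μ² - 3μ³)/((μ-1)(μ²-μ+1)) = (∂_Q F₁/∂_λ F₁)|_{(1,μ,1)}`,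
the logarithmic derivative identity
`d/dp [ log( (1-e^p)⁻¹ · e^{2p}(1 - e^p + e^{2p}) ) ] = -f(e^p)` holds; equivalently
`(1-μ)·exp(∫ -f(e^p) dp) = μ²(1-μ+μ²)` up to a multiplicative constant. -/
theorem trefoil_alexander_log_deriv (p : ℝ) (hp : p ≠ 0) :
    deriv (fun q : ℝ =>
        Real.log (Real.exp (2 * q) * (1 - Real.exp q + Real.exp (2 * q)) / (1 - Real.exp q))) p
      = -((2 - 4 * Real.exp p + 6 * Real.exp p ^ 2 - 3 * Real.exp p ^ 3) /
          ((Real.exp p - 1) * (Real.exp p ^ 2 - Real.exp p + 1))) := by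
  have he1 : Real.exp p ≠ 1 := fun h =>
    hp (Real.exp_injective (h.trans Real.exp_zero.symm))
  set t := Real.exp p with ht
  have hD : 1 - t ≠ 0 := fun h => he1 (by linarith)
  have hQ : t ^ 2 - t + 1 > 0 := by nlinarith [sq_nonneg (t - 1), sq_nonneg t]
  have hN : Real.exp (2 * p) * (1 - t + Real.exp (2 * p)) ≠ 0 := by
    have h2 : Real.exp (2 * p) = t ^ 2 := by rw [two_mul, Real.exp_add]; ring
    rw [h2]
    have h1 : (0:ℝ) < t := Real.exp_pos p
    exact ne_of_gt (mul_pos (pow_pos h1 2) (by linarith))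
  have hfx : Real.exp (2 * p) * (1 - t + Real.exp (2 * p)) / (1 - t) ≠ 0 :=
    div_ne_zero hN hD
  -- derivatives of pieces
  have hE : HasDerivAt Real.exp t p := Real.hasDerivAt_exp p
  have hE2 : HasDerivAt (fun q => Real.exp (2 * q)) (2 * Real.exp (2 * p)) p := by
    have h := ((hasDerivAt_id p).const_mul (2:ℝ)).exp
    simpa [mul_comm] using h
  have hNum : HasDerivAt (fun q => Real.exp (2 * q) * (1 - Real.exp q + Real.exp (2 * q)))
      (2 * Real.exp (2 * p) * (1 - t + Real.exp (2 * p)) +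
        Real.exp (2 * p) * (-t + 2 * Real.exp (2 * p))) p := by
    have := hE2.fun_mul (((hasDerivAt_const p (1:ℝ)).fun_sub hE).fun_add hE2)
    refine this.congr_deriv ?_
    rw [ht]
    ring
  have hDen : HasDerivAt (fun q => 1 - Real.exp q) (-t) p := by
    simpa using (hasDerivAt_const p (1:ℝ)).fun_sub hE
  have hDiv := hNum.fun_div hDen hD
  have hLog := (hDiv.log hfx)
  rw [hLog.deriv]
  have h2 : Real.exp (2 * p) = t ^ 2 := by rw [two_mul, Real.exp_add]; ring
  rw [h2]
  rw [← ht]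
  have hQ' : t ^ 2 - t + 1 ≠ 0 := ne_of_gt hQ
  have ht0 : t ≠ 0 := Real.exp_ne_zero p
  have hD' : t - 1 ≠ 0 := sub_ne_zero.mpr he1
  have hN' : t ^ 2 * (1 - t + t ^ 2) ≠ 0 := by
    have h1 : (0:ℝ) < t := Real.exp_pos p
    exact ne_of_gt (mul_pos (pow_pos h1 2) (by linarith))
  field_simp
  ring
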